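/- Let G be a connected simple graph of order n ≥ 5 that is not isomorphic to the cycle C_n. Then Aut(G) ≅ Aut(L(G)) ≅ Aut(S(G)) ≅ Aut(C(G)) ≅ Aut(M(G)) as abstract groups, where L(G) is the line graph of G. -/

import Mathlib

open SimpleGraph

/-- The subdivision graph `S(G)`: each edge `{u,v}` of `G` is replaced by a new
vertex (the element of `G.edgeSet`) adjacent to both `u` and `v`. -/
def subdivisionGraph {V : Type*} (G : SimpleGraph V) : SimpleGraph (V ⊕ G.edgeSet) where
  Adj x y :=
    match x, y with
    | Sum.inl u, Sum.inr e => u ∈ (e : Sym2 V)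
    | Sum.inr e, Sum.inl u => u ∈ (e : Sym2 V)
    | _, _ => False
  symm := by constructor; rintro (u | e) (v | f) h <;> simp_all
  loopless := by constructor; rintro (u | e) h <;> simp_all

/-- The central graph `C(G)`: obtained from the subdivision graph `S(G)` by joining
every pair of distinct vertices of `G` that are non-adjacent in `G`. -/
def centralGraph {V : Type*} (G : SimpleGraph V) : SimpleGraph (V ⊕ G.edgeSet) where
  Adj x y :=
    match x, y with
    | Sum.inl u, Sum.inl v => u ≠ v ∧ ¬ G.Adj u v
    | Sum.inl u, Sum.inr e => u ∈ (e : Sym2 V)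
    | Sum.inr e, Sum.inl u => u ∈ (e : Sym2 V)
    | Sum.inr _, Sum.inr _ => False
  symm := by
    constructor
    rintro (u | e) (v | f) h
    · exact ⟨h.1.symm, fun a => h.2 a.symm⟩
    · exact h
    · exact h
    · exact h
  loopless := by
    constructor
    rintro (u | e) h
    · exact h.1 rfl
    · exact h

/-- The middle graph `M(G)`: obtained from the subdivision graph `S(G)` by joining
each pair of distinct subdivided vertices corresponding to adjacent edges of `G`. -/
def middleGraph {V : Type*} (G : SimpleGraph V) : SimpleGraph (V ⊕ G.edgeSet) where
  Adj x y :=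
    match x, y with
    | Sum.inl u, Sum.inr e => u ∈ (e : Sym2 V)
    | Sum.inr e, Sum.inl u => u ∈ (e : Sym2 V)
    | Sum.inr e, Sum.inr f => e ≠ f ∧ ∃ u, u ∈ (e : Sym2 V) ∧ u ∈ (f : Sym2 V)
    | Sum.inl _, Sum.inl _ => False
  symm := by
    constructor
    rintro (u | e) (v | f) h
    · exact h
    · exact h
    · exact h
    · exact ⟨h.1.symm, h.2.imp fun u hu => ⟨hu.2, hu.1⟩⟩
  loopless := by
    constructor
    rintro (u | e) h
    · exact h
    · exact h.1 rfl

/-- The line graph `L(G)`: vertices are the edges of `G`, two distinct edges being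
adjacent when they share an endpoint. -/
def lineG {V : Type*} (G : SimpleGraph V) : SimpleGraph G.edgeSet where
  Adj e f := e ≠ f ∧ ∃ u, u ∈ (e : Sym2 V) ∧ u ∈ (f : Sym2 V)
  symm := ⟨fun e f h => ⟨h.1.symm, h.2.imp fun u hu => ⟨hu.2, hu.1⟩⟩⟩
  loopless := ⟨fun e h => h.1 rfl⟩

/-- The endline graph `G⁺`: to each vertex `v` of `G` we attach a new pendant
vertex; `Sum.inl` is the copy of `V(G)` and `Sum.inr` are the new vertices. -/
def endlineGraph {V : Type*} (G : SimpleGraph V) : SimpleGraph (V ⊕ V) where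
  Adj x y :=
    match x, y with
    | Sum.inl u, Sum.inl v => G.Adj u v
    | Sum.inl u, Sum.inr v => u = v
    | Sum.inr u, Sum.inl v => u = v
    | Sum.inr _, Sum.inr _ => False
  symm := by
    constructor
    rintro (u | u) (v | v) h
    · exact h.symm
    · exact h.symm
    · exact h.symm
    · exact h
  loopless := by
    constructor
    rintro (u | u) h
    · exact G.ne_of_adj h rfl
    · exact h

/-- The join `G₁ + G₂` of two vertex-disjoint graphs: their disjoint union together
with all edges between the two vertex sets. -/
def joinGraph {V₁ V₂ : Type*} (G₁ : SimpleGraph V₁) (G₂ : SimpleGraph V₂) :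
    SimpleGraph (V₁ ⊕ V₂) where
  Adj x y :=
    match x, y with
    | Sum.inl u, Sum.inl v => G₁.Adj u v
    | Sum.inr u, Sum.inr v => G₂.Adj u v
    | Sum.inl _, Sum.inr _ => True
    | Sum.inr _, Sum.inl _ => True
  symm := by
    constructor
    rintro (u | u) (v | v) h
    · exact h.symm
    · trivial
    · trivial
    · exact h.symm
  loopless := by
    constructor
    rintro (u | u) h
    · exact G₁.ne_of_adj h rfl
    · exact G₂.ne_of_adj h rfl

/-- The maximum degree `Δ(H)` of a graph (as a supremum of cardinalities of
neighborhoods, which agrees with the usual maximum degree for finite graphs). -/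
noncomputable def maxDeg {W : Type*} (H : SimpleGraph W) : ℕ :=
  sSup {k | ∃ v : W, k = (H.neighborSet v).ncard}

/-- A graph is regular if all vertices have the same degree. -/
def IsRegularGraph {W : Type*} (H : SimpleGraph W) : Prop :=
  ∀ u v : W, (H.neighborSet u).ncard = (H.neighborSet v).ncard

/-- The distinguishing number `D(H)`: the least `d` such that `H` admits a vertex
coloring with `d` colors preserved only by the identity automorphism. -/
noncomputable def distinguishingNumber {W : Type*} (H : SimpleGraph W) : ℕ :=
  sInf {d | ∃ c : W → Fin d, ∀ φ : H ≃g H, (∀ v, c (φ v) = c v) → ∀ v, φ v = v}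

/-- The distinguishing index `D'(H)`: the least `d` such that `H` admits an edge
coloring with `d` colors preserved only by the identity automorphism. -/
noncomputable def distinguishingIndex {W : Type*} (H : SimpleGraph W) : ℕ :=
  sInf {d | ∃ c : H.edgeSet → Fin d,
    ∀ φ : H ≃g H, (∀ e, c (φ.mapEdgeSet e) = c e) → ∀ v, φ v = v}

/-- A proper total coloring of `H` with `d` colors: adjacent vertices, adjacent
edges, and incident vertex/edge pairs receive distinct colors. -/
def IsProperTotalColoring {W : Type*} (H : SimpleGraph W) {d : ℕ}
    (f : W ⊕ H.edgeSet → Fin d) : Prop :=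
  (∀ u v : W, H.Adj u v → f (Sum.inl u) ≠ f (Sum.inl v)) ∧
  (∀ e e' : H.edgeSet, e ≠ e' → (∃ u, u ∈ (e : Sym2 W) ∧ u ∈ (e' : Sym2 W)) →
    f (Sum.inr e) ≠ f (Sum.inr e')) ∧
  (∀ (v : W) (e : H.edgeSet), v ∈ (e : Sym2 W) → f (Sum.inl v) ≠ f (Sum.inr e))

/-- An automorphism `φ` preserves a total coloring `f`. -/
def PreservesTotalColoring {W : Type*} (H : SimpleGraph W) {d : ℕ}
    (f : W ⊕ H.edgeSet → Fin d) (φ : H ≃g H) : Prop :=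
  (∀ v : W, f (Sum.inl (φ v)) = f (Sum.inl v)) ∧
  (∀ e : H.edgeSet, f (Sum.inr (φ.mapEdgeSet e)) = f (Sum.inr e))

/-- The total chromatic number `χ''(H)`. -/
noncomputable def totalChromaticNumber {W : Type*} (H : SimpleGraph W) : ℕ :=
  sInf {d | ∃ f : W ⊕ H.edgeSet → Fin d, IsProperTotalColoring H f}

/-- The total distinguishing chromatic number `χ''_D(H)`: the least `d` such that
`H` has a proper total coloring with `d` colors preserved only by the identity. -/
noncomputable def totalDistinguishingChromaticNumber {W : Type*} (H : SimpleGraph W) : ℕ :=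
  sInf {d | ∃ f : W ⊕ H.edgeSet → Fin d, IsProperTotalColoring H f ∧
    ∀ φ : H ≃g H, PreservesTotalColoring H f φ → ∀ v, φ v = v}

/-- The color class `C_H(u)` of a vertex under a total coloring: the color of `u`
together with the colors of the edges incident to `u`. -/
def totalColorClass {W : Type*} (H : SimpleGraph W) {d : ℕ}
    (f : W ⊕ H.edgeSet → Fin d) (u : W) : Set (Fin d) :=
  {f (Sum.inl u)} ∪ {x | ∃ e : H.edgeSet, u ∈ (e : Sym2 W) ∧ x = f (Sum.inr e)}

/-- An AVD-total coloring: a proper total coloring in which adjacent vertices have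
distinct color classes. -/
def IsAVDTotalColoring {W : Type*} (H : SimpleGraph W) {d : ℕ}
    (f : W ⊕ H.edgeSet → Fin d) : Prop :=
  IsProperTotalColoring H f ∧
  ∀ u v : W, H.Adj u v → totalColorClass H f u ≠ totalColorClass H f v

/-- The AVD-total chromatic number `χ''ₐ(H)`. -/
noncomputable def avdTotalChromaticNumber {W : Type*} (H : SimpleGraph W) : ℕ :=
  sInf {d | ∃ f : W ⊕ H.edgeSet → Fin d, IsAVDTotalColoring H f}

/-- A total dominator coloring: a proper vertex coloring such that every vertex is
adjacent to every vertex of some (nonempty) color class. -/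
def IsTotalDominatorColoring {W : Type*} (H : SimpleGraph W) {d : ℕ}
    (c : W → Fin d) : Prop :=
  (∀ u v : W, H.Adj u v → c u ≠ c v) ∧
  (∀ v : W, ∃ i : Fin d, (∃ w, c w = i) ∧ ∀ w, c w = i → H.Adj v w)

/-- The total dominator chromatic number `χᵗ_d(H)`. -/
noncomputable def tdChromaticNumber {W : Type*} (H : SimpleGraph W) : ℕ :=
  sInf {d | ∃ c : W → Fin d, IsTotalDominatorColoring H c}


section Aux
variable {V : Type*} {G : SimpleGraph V}

lemma aux_walk_closed {S : Set V} (hcl : ∀ ⦃a b : V⦄, a ∈ S → G.Adj a b → b ∈ S) :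
    ∀ {a b : V}, G.Walk a b → a ∈ S → b ∈ S := by
  intro a b p
  induction p with
  | nil => exact id
  | cons h _ ih => exact fun ha => ih (hcl ha h)

lemma aux_exists_crossing (hpre : G.Preconnected) {S : Set V} {v w : V}
    (hv : v ∈ S) (hw : w ∉ S) : ∃ a b, a ∈ S ∧ b ∉ S ∧ G.Adj a b := by
  by_contra hc
  obtain ⟨p⟩ := hpre v w
  exact hw (aux_walk_closed
    (fun a b ha hab => by_contra fun hb => hc ⟨a, b, ha, hb, hab⟩) p hv)

lemma aux_shared_unique {e f : Sym2 V} (hef : e ≠ f) {x y : V}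
    (hxe : x ∈ e) (hxf : x ∈ f) (hye : y ∈ e) (hyf : y ∈ f) : x = y := by
  by_contra hxy
  exact hef (Sym2.eq_of_ne_mem hxy hxe hye hxf hyf)

lemma aux_mem_eq {z : Sym2 V} {u v w : V} (hu : u ∈ z) (hv : v ∈ z) (hw : w ∈ z)
    (hvu : v ≠ u) (hwu : w ≠ u) : v = w := by
  rw [← Sym2.other_spec hu] at hv hw
  rcases Sym2.mem_iff.1 hv with h | h
  · exact absurd h hvu
  rcases Sym2.mem_iff.1 hw with h' | h'
  · exact absurd h' hwu
  · rw [h, h']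

lemma aux_exists_incident [Fintype V] (hpre : G.Preconnected) (hn : 2 ≤ Fintype.card V)
    (v : V) : ∃ e : G.edgeSet, v ∈ (e : Sym2 V) := by
  obtain ⟨w, hw⟩ := Fintype.exists_ne_of_one_lt_card (by omega) v
  obtain ⟨a, b, ha, hb, hab⟩ := aux_exists_crossing hpre (S := {v}) rfl hw
  rw [Set.mem_singleton_iff] at ha
  subst ha
  exact ⟨⟨s(a, b), hab⟩, Sym2.mem_mk_left _ _⟩

/-- `u` lies on at least two edges. -/
def HasTwo (G : SimpleGraph V) (u : V) : Prop :=
  ∃ e f : G.edgeSet, e ≠ f ∧ u ∈ (e : Sym2 V) ∧ u ∈ (f : Sym2 V)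

lemma aux_exists_third [Fintype V] (hn : 3 ≤ Fintype.card V) (u w : V) :
    ∃ z : V, z ≠ u ∧ z ≠ w := by
  classical
  by_contra hc
  push_neg at hc
  have hsub : (Finset.univ : Finset V) ⊆ {u, w} := fun z _ => by
    rcases eq_or_ne z u with h | h
    · simp [h]
    · simp [hc z h]
  have h2 : ({u, w} : Finset V).card ≤ 2 :=
    (Finset.card_insert_le _ _).trans (by simp)
  have := (Finset.card_le_card hsub).trans h2
  simp only [Finset.card_univ] at this
  omega

lemma aux_deg1 [Fintype V] (hpre : G.Preconnected) (hn : 3 ≤ Fintype.card V) {u : V}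
    (h1 : ¬ HasTwo G u) {e : G.edgeSet} (he : u ∈ (e : Sym2 V)) :
    ∃ w, w ∈ (e : Sym2 V) ∧ w ≠ u ∧ HasTwo G w ∧ ∀ f : G.edgeSet, u ∈ (f : Sym2 V) → f = e := by
  have hnd : ¬ (e : Sym2 V).IsDiag := G.not_isDiag_of_mem_edgeSet e.2
  obtain ⟨w, hwe, hwu⟩ : ∃ w, w ∈ (e : Sym2 V) ∧ w ≠ u :=
    ⟨Sym2.Mem.other he, Sym2.other_mem he, Sym2.other_ne hnd he⟩
  obtain ⟨z, hzu, hzw⟩ := aux_exists_third hn u w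
  have hzS : z ∉ ({u, w} : Set V) := by simp [hzu, hzw]
  obtain ⟨a, b, ha, hb, hab⟩ := aux_exists_crossing hpre (S := ({u, w} : Set V))
    (Set.mem_insert u {w}) hzS
  simp only [Set.mem_insert_iff, Set.mem_singleton_iff, not_or] at ha hb
  rcases ha with ha | ha
  · -- a = u : second edge at u, contradiction
    exfalso
    apply h1
    refine ⟨e, ⟨s(a, b), hab⟩, fun hef => ?_, he, ha ▸ Sym2.mem_mk_left a b⟩
    have hcv : (e : Sym2 V) = s(a, b) := congrArg Subtype.val hef
    have hwf : w ∈ s(a, b) := hcv ▸ hwe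
    simp only [Sym2.mem_iff] at hwf
    rcases hwf with h | h
    · exact hwu (h.trans ha)
    · exact hb.2 h.symm
  · -- a = w : second edge at w
    refine ⟨w, hwe, hwu, ⟨e, ⟨s(a, b), hab⟩, fun hef => ?_, hwe, ha ▸ Sym2.mem_mk_left a b⟩,
      fun g hg => ?_⟩
    · have hcv : (e : Sym2 V) = s(a, b) := congrArg Subtype.val hef
      have huf : u ∈ s(a, b) := hcv ▸ he
      simp only [Sym2.mem_iff] at huf
      rcases huf with h | h
      · exact hwu (ha ▸ h.symm)
      · exact hb.1 h.symm
    · by_contra hge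
      exact h1 ⟨e, g, fun h' => hge h'.symm, he, hg⟩

end Aux
lemma aux_modlem {m a b : ℕ} (hm : 2 ≤ m) (ha : a < m) (hb : b < m) :
    (m - b + a) % m = 1 ↔ a = (b + 1) % m := by
  rcases Nat.lt_or_ge (b + 1) m with h | h
  · rw [Nat.mod_eq_of_lt h]
    rcases Nat.lt_or_ge b a with h2 | h2
    · have he : m - b + a = m + (a - b) := by omega
      rw [he, Nat.add_mod_left, Nat.mod_eq_of_lt (by omega)]
      omega
    · have he : m - b + a = m - (b - a) := by omega
      rw [he]
      rcases Nat.eq_or_lt_of_le h2 with h3 | h3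
      · subst h3
        simp only [Nat.sub_self, Nat.sub_zero, Nat.mod_self]
        omega
      · rw [Nat.mod_eq_of_lt (by omega)]
        omega
  · have hb1 : b + 1 = m := by omega
    have hmb : m - b = 1 := by omega
    rw [hmb, hb1, Nat.mod_self]
    rcases Nat.eq_or_lt_of_le (show a + 1 ≤ m by omega) with h2 | h2
    · rw [show 1 + a = m by omega, Nat.mod_self]
      omega
    · rw [Nat.mod_eq_of_lt (by rwa [Nat.add_comm])]
      omega

lemma aux_cycle [Fintype V] (hconn : G.Connected) (hn : 3 ≤ Fintype.card V)
    (h2 : ∀ v : V, ∃ a b, a ≠ b ∧ G.Adj v a ∧ G.Adj v b ∧ ∀ c, G.Adj v c → c = a ∨ c = b) :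
    Nonempty (G ≃g cycleGraph (Fintype.card V)) := by
  classical
  choose nA nB hAB hA hB hcov using h2
  have : Nonempty V := hconn.nonempty
  obtain ⟨v0⟩ := this
  set step : V → V → V := fun p c => if nA c = p then nB c else nA c with hstepdef
  set y : ℕ → V × V := fun n => Nat.rec (v0, nA v0) (fun _ p => (p.2, step p.1 p.2)) n with hy
  set x : ℕ → V := fun n => (y n).1 with hxdef
  have hx0 : x 0 = v0 := rfl
  have hxs : ∀ n, x (n + 2) = step (x n) (x (n + 1)) := fun n => rfl
  have hstep : ∀ p c, G.Adj c p → G.Adj c (step p c) ∧ step p c ≠ p := by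
    intro p c h
    by_cases hc : nA c = p
    · simp only [hstepdef, if_pos hc]
      exact ⟨hB c, fun hh => hAB c (hc.trans hh.symm)⟩
    · simp only [hstepdef, if_neg hc]
      exact ⟨hA c, hc⟩
  have hadj : ∀ n, G.Adj (x n) (x (n + 1)) := by
    intro n
    induction n with
    | zero => exact hA v0
    | succ n ih =>
      rw [hxs n]
      exact (hstep _ _ ih.symm).1
  have hne2 : ∀ n, x (n + 2) ≠ x n := by
    intro n
    rw [hxs n]
    exact (hstep _ _ (hadj n).symm).2
  have hnbr : ∀ n c, G.Adj (x (n + 1)) c → c = x n ∨ c = x (n + 2) := by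
    intro n c hc
    rw [hxs n]
    have h1 := hcov _ _ hc
    have h0 := hcov _ _ (hadj n).symm
    by_cases hc2 : nA (x (n + 1)) = x n
    · simp only [hstepdef, if_pos hc2]
      rcases h1 with h | h
      · exact Or.inl (h.trans hc2)
      · exact Or.inr h
    · simp only [hstepdef, if_neg hc2]
      rcases h0 with h | h
      · exact absurd h.symm hc2
      · rcases h1 with h' | h'
        · exact Or.inr h'
        · exact Or.inl (h'.trans h.symm)
  -- find first repetition
  have hPex : ∃ mn : ℕ, 0 < mn ∧ ∃ i, i < mn ∧ x i = x mn := by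
    obtain ⟨i, j, hij, hxy⟩ := Finite.exists_ne_map_eq_of_infinite x
    rcases Nat.lt_or_ge i j with h | h
    · exact ⟨j, by omega, i, h, hxy⟩
    · exact ⟨i, by omega, j, by omega, hxy.symm⟩
  set m := Nat.find hPex with hmdef
  obtain ⟨hmpos, i, him, hxi⟩ := Nat.find_spec hPex
  have hmin : ∀ k, k < m → ¬(0 < k ∧ ∃ i, i < k ∧ x i = x k) := fun k hk => Nat.find_min hPex hk
  have hinj : ∀ a b, a < b → b < m → x a ≠ x b := by
    intro a b hab hbm h
    exact hmin b hbm ⟨by omega, a, hab, h⟩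
  -- i = 0
  have hi0 : i = 0 := by
    by_contra hi
    obtain ⟨i', rfl⟩ := Nat.exists_eq_succ_of_ne_zero hi
    have hm1 : i' + 1 + 1 ≠ m := by
      intro h
      exact (hadj (i' + 1)).ne (by rw [h, hxi])
    have hm2 : i' + 1 + 2 ≠ m := by
      intro h
      exact hne2 (i' + 1) (by rw [h, hxi])
    have hm0 : m - 1 + 1 = m := by omega
    have hadjm : G.Adj (x (i' + 1)) (x (m - 1)) := by
      have h5 := hadj (m - 1)
      rw [hm0, ← hxi] at h5
      exact h5.symm
    rcases hnbr i' _ hadjm with h | h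
    · exact hinj i' (m - 1) (by omega) (by omega) h.symm
    · exact hinj (i' + 2) (m - 1) (by omega) (by omega) h.symm
  subst hi0
  have hx0m : x m = x 0 := hxi.symm
  have hm3 : 3 ≤ m := by
    have hmpos' : 0 < m := hmpos
    have hm1 : m ≠ 1 := by
      intro h
      rw [h] at hx0m
      exact (hadj 0).ne hx0m.symm
    have hm2' : m ≠ 2 := by
      intro h
      rw [h] at hx0m
      exact hne2 0 hx0m
    omega
  -- x (m+1) = x 1
  have hxm1 : x (m + 1) = x 1 := by
    have h1 : G.Adj (x 0) (x (m + 1)) := by rw [← hx0m]; exact hadj m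
    have h2 : G.Adj (x 0) (x (m - 1)) := by
      have h5 := hadj (m - 1)
      rw [show m - 1 + 1 = m by omega, hx0m] at h5
      exact h5.symm
    have h3 : x (m + 1) ≠ x (m - 1) := by
      have := hne2 (m - 1)
      rwa [show m - 1 + 2 = m + 1 by omega] at this
    have h4 : x 1 ≠ x (m - 1) := hinj 1 (m - 1) (by omega) (by omega)
    have e1 := hcov _ _ h1
    have e2 := hcov _ _ h2
    have e3 := hcov _ _ (hadj 0)
    rcases e1 with e1 | e1 <;> rcases e2 with e2 | e2 <;> rcases e3 with e3 | e3
    · exact absurd (e1.trans e2.symm) h3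
    · exact absurd (e1.trans e2.symm) h3
    · exact e1.trans e3.symm
    · exact absurd (e3.trans e2.symm) h4
    · exact absurd (e3.trans e2.symm) h4
    · exact e1.trans e3.symm
    · exact absurd (e1.trans e2.symm) h3
    · exact absurd (e1.trans e2.symm) h3
  -- periodicity
  have hper : ∀ k, x (k + m) = x k := by
    intro k
    induction k using Nat.strong_induction_on with
    | _ k ih =>
      match k with
      | 0 => simpa using hx0m
      | 1 => rw [Nat.add_comm]; exact hxm1
      | (k + 2) =>
        have e1 := ih k (by omega)
        have e2 := ih (k + 1) (by omega)
        rw [show k + 2 + m = (k + m) + 2 by omega, hxs (k + m), e1,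
          show k + m + 1 = (k + 1) + m by omega, e2, ← hxs k]
  have hmod : ∀ k, x (k % m) = x k := by
    intro k
    induction k using Nat.strong_induction_on with
    | _ k ih =>
      rcases Nat.lt_or_ge k m with h | h
      · rw [Nat.mod_eq_of_lt h]
      · calc x (k % m) = x ((k - m) % m) := by rw [Nat.mod_eq_sub_mod h]
          _ = x (k - m) := ih _ (by omega)
          _ = x (k - m + m) := (hper (k - m)).symm
          _ = x k := by rw [show k - m + m = k by omega]
  -- all vertices are visited
  have hmpos' : 0 < m := hmpos
  have hS : ∀ v : V, ∃ k, k < m ∧ x k = v := by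
    have hcl : ∀ ⦃a b : V⦄, a ∈ {v : V | ∃ k, x k = v} → G.Adj a b →
        b ∈ {v : V | ∃ k, x k = v} := by
      rintro a b ⟨k, rfl⟩ hab
      rcases Nat.eq_zero_or_pos k with rfl | hk
      · have h6 : G.Adj (x (m - 1 + 1)) b := by
          rwa [show m - 1 + 1 = m by omega, hx0m]
        rcases hnbr (m - 1) b h6 with h | h
        · exact ⟨m - 1, h.symm⟩
        · exact ⟨m - 1 + 2, h.symm⟩
      · obtain ⟨k', rfl⟩ := Nat.exists_eq_succ_of_ne_zero (by omega : k ≠ 0)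
        rcases hnbr k' b hab with h | h
        · exact ⟨k', h.symm⟩
        · exact ⟨k' + 2, h.symm⟩
    intro v
    obtain ⟨p⟩ := hconn.preconnected (x 0) v
    obtain ⟨k, rfl⟩ := aux_walk_closed hcl p ⟨0, rfl⟩
    exact ⟨k % m, Nat.mod_lt _ (by omega), hmod k⟩
  set f : Fin m → V := fun k => x k.val with hfdef
  have hfinj : Function.Injective f := by
    intro a b hab
    rcases lt_trichotomy a.val b.val with h | h | h
    · exact absurd hab (hinj _ _ h b.isLt)
    · exact Fin.ext h
    · exact absurd hab.symm (hinj _ _ h a.isLt)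
  have hfsurj : Function.Surjective f := by
    intro v
    obtain ⟨k, hk, hxk⟩ := hS v
    exact ⟨⟨k, hk⟩, hxk⟩
  have hcard : Fintype.card V = m := by
    rw [← Fintype.card_fin m]
    exact (Fintype.card_congr (Equiv.ofBijective f ⟨hfinj, hfsurj⟩)).symm
  have finInj : ∀ a b : ℕ, a < m → b < m → x a = x b → a = b := by
    intro a b ha hb h
    rcases lt_trichotomy a b with h' | h' | h'
    · exact absurd h (hinj a b h' hb)
    · exact h'
    · exact absurd h.symm (hinj b a h' ha)
  have hnbr0 : ∀ c, G.Adj (x 0) c → c = x 1 ∨ c = x (m - 1) := by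
    intro c hc
    have h6 : G.Adj (x (m - 1 + 1)) c := by rwa [show m - 1 + 1 = m by omega, hx0m]
    rcases hnbr (m - 1) c h6 with h | h
    · exact Or.inr h
    · rw [show m - 1 + 2 = m + 1 by omega, hxm1] at h
      exact Or.inl h
  have key : ∀ a b : ℕ, a < m → b < m →
      (G.Adj (x a) (x b) ↔ (b = (a + 1) % m ∨ a = (b + 1) % m)) := by
    intro a b ha hb
    constructor
    · intro hab
      rcases Nat.eq_zero_or_pos a with rfl | hapos
      · rcases hnbr0 _ hab with h | h
        · left
          have h8 : (0 + 1) % m = 1 := Nat.mod_eq_of_lt (by omega)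
          rw [h8]
          exact finInj b 1 hb (by omega) h
        · right
          have h9 : b = m - 1 := finInj b (m - 1) hb (by omega) h
          rw [h9, show m - 1 + 1 = m by omega, Nat.mod_self]
      · obtain ⟨a', rfl⟩ := Nat.exists_eq_succ_of_ne_zero (by omega : a ≠ 0)
        rcases hnbr a' _ hab with h | h
        · right
          rw [finInj b a' hb (by omega) h, Nat.mod_eq_of_lt (by omega)]
        · left
          have h7 : x b = x ((a' + 1 + 1) % m) := by rw [hmod]; exact h
          exact finInj b _ hb (Nat.mod_lt _ (by omega)) h7
    · intro hab
      rcases hab with h | h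
      · have h7 : x b = x (a + 1) := by rw [h, hmod]
        rw [h7]
        exact hadj a
      · have h7 : x a = x (b + 1) := by rw [h, hmod]
        rw [h7]
        exact (hadj b).symm
  rw [hcard]
  have hm2 : 2 ≤ m := by omega
  have cyc : ∀ i j : Fin m, (cycleGraph m).Adj i j ↔ G.Adj (x i.val) (x j.val) := by
    intro i j
    rw [cycleGraph_adj', key i.val j.val i.isLt j.isLt]
    have hs1 : (i - j).val = (m - j.val + i.val) % m := by rw [Fin.sub_def]
    have hs2 : (j - i).val = (m - i.val + j.val) % m := by rw [Fin.sub_def]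
    rw [hs1, hs2, aux_modlem hm2 i.isLt j.isLt, aux_modlem hm2 j.isLt i.isLt]
    exact or_comm
  refine ⟨⟨(Equiv.ofBijective f ⟨hfinj, hfsurj⟩).symm, @fun a b => ?_⟩⟩
  set e' := Equiv.ofBijective f ⟨hfinj, hfsurj⟩ with he'
  rw [cyc]
  show G.Adj (e' (e'.symm a)) (e' (e'.symm b)) ↔ G.Adj a b
  rw [e'.apply_symm_apply, e'.apply_symm_apply]
lemma aux_rep {α : Type*} (z : Sym2 α) : ∃ u v, z = s(u, v) := by
  induction z using Sym2.ind with
  | _ u v => exact ⟨u, v, rfl⟩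

lemma aux_coe_mapEdgeSet {V : Type*} {G : SimpleGraph V} (σ : G ≃g G) (e : G.edgeSet) :
    (σ.mapEdgeSet e : Sym2 V) = Sym2.map σ (e : Sym2 V) := rfl

lemma aux_mem_mapEdgeSet {V : Type*} {G : SimpleGraph V} (σ : G ≃g G) (u : V) (e : G.edgeSet) :
    σ u ∈ (σ.mapEdgeSet e : Sym2 V) ↔ u ∈ (e : Sym2 V) := by
  rw [aux_coe_mapEdgeSet, Sym2.mem_map]
  constructor
  · rintro ⟨a, ha, haa⟩
    obtain rfl := σ.toEquiv.injective haa
    exact ha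
  · intro h
    exact ⟨u, h, rfl⟩

lemma aux_transfer {V : Type*} (G : SimpleGraph V) (H : SimpleGraph (V ⊕ G.edgeSet))
    (h_ir : ∀ (u : V) (e : G.edgeSet), H.Adj (Sum.inl u) (Sum.inr e) ↔ u ∈ (e : Sym2 V))
    (h_ll : ∀ (σ : G ≃g G) (u v : V),
      H.Adj (Sum.inl (σ u)) (Sum.inl (σ v)) ↔ H.Adj (Sum.inl u) (Sum.inl v))
    (h_rr : ∀ (σ : G ≃g G) (e f : G.edgeSet),
      H.Adj (Sum.inr (σ.mapEdgeSet e)) (Sum.inr (σ.mapEdgeSet f)) ↔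
        H.Adj (Sum.inr e) (Sum.inr f))
    (h_parts : ∀ (φ : H ≃g H) (u : V), ∃ u', φ (Sum.inl u) = Sum.inl u') :
    Nonempty ((G ≃g G) ≃* (H ≃g H)) := by
  classical
  have h_ri : ∀ (u : V) (e : G.edgeSet), H.Adj (Sum.inr e) (Sum.inl u) ↔ u ∈ (e : Sym2 V) := by
    intro u e
    rw [adj_comm]
    exact h_ir u e
  let Phi : (G ≃g G) → (H ≃g H) := fun σ =>
    { toEquiv := Equiv.sumCongr σ.toEquiv σ.mapEdgeSet
      map_rel_iff' := by
        intro x y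
        rcases x with u | e <;> rcases y with v | f
        · exact h_ll σ u v
        · show H.Adj (Sum.inl (σ u)) (Sum.inr (σ.mapEdgeSet f)) ↔ _
          rw [h_ir, h_ir, aux_mem_mapEdgeSet]
        · show H.Adj (Sum.inr (σ.mapEdgeSet e)) (Sum.inl (σ v)) ↔ _
          rw [h_ri, h_ri, aux_mem_mapEdgeSet]
        · exact h_rr σ e f }
  have hPhi_inl : ∀ (σ : G ≃g G) (u : V), Phi σ (Sum.inl u) = Sum.inl (σ u) := fun _ _ => rfl
  have hPhi_inr : ∀ (σ : G ≃g G) (e : G.edgeSet),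
      Phi σ (Sum.inr e) = Sum.inr (σ.mapEdgeSet e) := fun _ _ => rfl
  have hparts' : ∀ (φ : H ≃g H) (e : G.edgeSet), ∃ e', φ (Sum.inr e) = Sum.inr e' := by
    intro φ e
    rcases hq : φ (Sum.inr e) with w | f
    · exfalso
      obtain ⟨w', hw'⟩ := h_parts φ.symm w
      apply_fun φ.symm at hq
      rw [RelIso.symm_apply_apply, hw'] at hq
      simp at hq
    · exact ⟨f, rfl⟩
  let vmap : (H ≃g H) → V → V := fun φ u => (h_parts φ u).choose
  have vspec : ∀ φ u, φ (Sum.inl u) = Sum.inl (vmap φ u) := fun φ u => (h_parts φ u).choose_spec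
  let emap : (H ≃g H) → G.edgeSet → G.edgeSet := fun φ e => (hparts' φ e).choose
  have espec : ∀ φ e, φ (Sum.inr e) = Sum.inr (emap φ e) := fun φ e => (hparts' φ e).choose_spec
  have hvv : ∀ (φ : H ≃g H) (u : V), vmap φ.symm (vmap φ u) = u := by
    intro φ u
    have h1 := vspec φ.symm (vmap φ u)
    rw [← vspec φ u, RelIso.symm_apply_apply] at h1
    exact (Sum.inl.inj h1).symm
  have vinj : ∀ (φ : H ≃g H) (u v : V), vmap φ u = vmap φ v → u = v := by
    intro φ u v h
    have h1 := vspec φ u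
    rw [h, ← vspec φ v] at h1
    exact Sum.inl.inj (φ.toEquiv.injective h1)
  have compat : ∀ (φ : H ≃g H) (u : V) (e : G.edgeSet),
      u ∈ (e : Sym2 V) ↔ vmap φ u ∈ ((emap φ e : G.edgeSet) : Sym2 V) := by
    intro φ u e
    rw [← h_ir u e, ← h_ir (vmap φ u) (emap φ e), ← vspec, ← espec]
    exact (φ.map_adj_iff).symm
  have emapSym2 : ∀ (φ : H ≃g H) (e : G.edgeSet) (u v : V), (e : Sym2 V) = s(u, v) →
      ((emap φ e : G.edgeSet) : Sym2 V) = s(vmap φ u, vmap φ v) := by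
    intro φ e u v huv
    have hadj : G.Adj u v := G.mem_edgeSet.1 (huv ▸ e.2)
    have hu : u ∈ (e : Sym2 V) := by rw [huv]; exact Sym2.mem_mk_left u v
    have hv : v ∈ (e : Sym2 V) := by rw [huv]; exact Sym2.mem_mk_right u v
    have h1 := (compat φ u e).1 hu
    have h2 := (compat φ v e).1 hv
    have hne : vmap φ u ≠ vmap φ v := fun hh => hadj.ne (vinj φ u v hh)
    exact (Sym2.mem_and_mem_iff hne).1 ⟨h1, h2⟩
  have hGadj : ∀ (φ : H ≃g H) (u v : V), G.Adj u v → G.Adj (vmap φ u) (vmap φ v) := by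
    intro φ u v h
    have hs := emapSym2 φ ⟨s(u, v), h⟩ u v rfl
    have h5 := (emap φ ⟨s(u, v), h⟩).2
    rw [hs] at h5
    exact G.mem_edgeSet.1 h5
  let Psi : (H ≃g H) → (G ≃g G) := fun φ =>
    { toEquiv := ⟨vmap φ, vmap φ.symm, hvv φ, fun u => hvv φ.symm u⟩
      map_rel_iff' := by
        intro u v
        show G.Adj (vmap φ u) (vmap φ v) ↔ G.Adj u v
        constructor
        · intro h
          have h2 := hGadj φ.symm _ _ h
          rwa [hvv, hvv] at h2
        · exact hGadj φ u v }
  refine ⟨MulEquiv.mk' ⟨Phi, Psi, ?_, ?_⟩ ?_⟩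
  · intro σ
    apply RelIso.ext
    intro u
    have h1 := vspec (Phi σ) u
    rw [hPhi_inl σ u] at h1
    exact (Sum.inl.inj h1).symm
  · intro φ
    apply RelIso.ext
    intro x
    rcases x with u | e
    · exact ((hPhi_inl (Psi φ) u).trans (vspec φ u).symm)
    · rw [hPhi_inr (Psi φ) e, espec φ e]
      congr 1
      apply Subtype.ext
      obtain ⟨u, v, huv⟩ := aux_rep (e : Sym2 V)
      rw [emapSym2 φ e u v huv, aux_coe_mapEdgeSet, huv, Sym2.map_pair_eq]
      rfl
  · intro σ τ
    apply RelIso.ext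
    intro x
    rcases x with u | e
    · rfl
    · show Sum.inr ((σ * τ).mapEdgeSet e) = Sum.inr (σ.mapEdgeSet (τ.mapEdgeSet e))
      congr 1
      apply Subtype.ext
      obtain ⟨u, v, huv⟩ := aux_rep (e : Sym2 V)
      rw [aux_coe_mapEdgeSet, aux_coe_mapEdgeSet, aux_coe_mapEdgeSet, huv,
        Sym2.map_pair_eq, Sym2.map_pair_eq, Sym2.map_pair_eq]
      rfl
section Tri
variable {V : Type*} {G : SimpleGraph V}

/-- two distinct vertices in an edge determine it -/
lemma aux_twoMem {h k : G.edgeSet} {x y : V} (hxy : x ≠ y) (hx : x ∈ (h : Sym2 V))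
    (hy : y ∈ (h : Sym2 V)) (hk : (k : Sym2 V) = s(x, y)) : h = k :=
  Subtype.ext (((Sym2.mem_and_mem_iff hxy).1 ⟨hx, hy⟩).trans hk.symm)

/-- three pairwise-adjacent edges form a star or a triangle -/
lemma aux_starOrTriangle {e f g : G.edgeSet} (hef : e ≠ f) (heg : e ≠ g) (hfg : f ≠ g)
    (x : V) (hxe : x ∈ (e : Sym2 V)) (hxf : x ∈ (f : Sym2 V))
    (y : V) (hye : y ∈ (e : Sym2 V)) (hyg : y ∈ (g : Sym2 V))
    (z : V) (hzf : z ∈ (f : Sym2 V)) (hzg : z ∈ (g : Sym2 V)) :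
    (∃ w, w ∈ (e : Sym2 V) ∧ w ∈ (f : Sym2 V) ∧ w ∈ (g : Sym2 V)) ∨
    (∃ a b c : V, a ≠ b ∧ b ≠ c ∧ a ≠ c ∧ (e : Sym2 V) = s(a, b) ∧
      (f : Sym2 V) = s(b, c) ∧ (g : Sym2 V) = s(c, a)) := by
  rcases eq_or_ne x y with rfl | hxy
  · exact Or.inl ⟨x, hxe, hxf, hyg⟩
  · have hE : (e : Sym2 V) = s(x, y) := (Sym2.mem_and_mem_iff hxy).1 ⟨hxe, hye⟩
    rcases eq_or_ne z x with rfl | hzx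
    · exact absurd (aux_twoMem hxy hzg hyg hE).symm heg
    rcases eq_or_ne z y with rfl | hzy
    · exact absurd (aux_twoMem hxy hxf hzf hE).symm hef
    have hF : (f : Sym2 V) = s(x, z) := (Sym2.mem_and_mem_iff hzx.symm).1 ⟨hxf, hzf⟩
    have hG : (g : Sym2 V) = s(z, y) := (Sym2.mem_and_mem_iff hzy).1 ⟨hzg, hyg⟩
    exact Or.inr ⟨y, x, z, hxy.symm, hzx.symm, fun h => hzy h.symm,
      hE.trans (Sym2.eq_swap), hF, hG⟩

/-- any edge meets a triangle evenly -/
lemma aux_triangle_even {e f g h : G.edgeSet} {a b c : V}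
    (hab : a ≠ b) (hbc : b ≠ c) (hac : a ≠ c)
    (hE : (e : Sym2 V) = s(a, b)) (hF : (f : Sym2 V) = s(b, c)) (hG : (g : Sym2 V) = s(c, a))
    (hhe : h ≠ e) (hhf : h ≠ f) (hhg : h ≠ g) :
    (¬((∃ w, w ∈ (h : Sym2 V) ∧ w ∈ (e : Sym2 V)) ∧
       (∃ w, w ∈ (h : Sym2 V) ∧ w ∈ (f : Sym2 V)) ∧
       (∃ w, w ∈ (h : Sym2 V) ∧ w ∈ (g : Sym2 V)))) ∧
    ((∃ w, w ∈ (h : Sym2 V) ∧ w ∈ (e : Sym2 V)) →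
      (∃ w, w ∈ (h : Sym2 V) ∧ w ∈ (f : Sym2 V)) ∨
      (∃ w, w ∈ (h : Sym2 V) ∧ w ∈ (g : Sym2 V))) := by
  constructor
  · rintro ⟨⟨w1, hw1h, hw1e⟩, ⟨w2, hw2h, hw2f⟩, ⟨w3, hw3h, hw3g⟩⟩
    rw [hE, Sym2.mem_iff] at hw1e
    rw [hF, Sym2.mem_iff] at hw2f
    rw [hG, Sym2.mem_iff] at hw3g
    rcases hw1e with rfl | rfl <;> rcases hw2f with rfl | rfl <;> rcases hw3g with rfl | rfl
    · exact hhe (aux_twoMem hab hw1h hw2h hE)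
    · exact hhe (aux_twoMem hab hw1h hw2h hE)
    · exact hhg (aux_twoMem hac.symm hw2h hw1h hG)
    · exact hhg (aux_twoMem hac.symm hw2h hw1h hG)
    · exact hhf (aux_twoMem hbc hw1h hw3h hF)
    · exact hhe (aux_twoMem hab hw3h hw1h hE)
    · exact hhf (aux_twoMem hbc hw1h hw2h hF)
    · exact hhf (aux_twoMem hbc hw1h hw2h hF)
  · rintro ⟨w, hwh, hwe⟩
    rw [hE, Sym2.mem_iff] at hwe
    rcases hwe with rfl | rfl
    · exact Or.inr ⟨w, hwh, by rw [hG]; exact Sym2.mem_mk_right c w⟩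
    · exact Or.inl ⟨w, hwh, by rw [hF]; exact Sym2.mem_mk_left w c⟩
end Tri


section Star
variable {V : Type*} {G : SimpleGraph V}

lemma aux_noshare {p q r s : V} (h1 : p ≠ r) (h2 : p ≠ s) (h3 : q ≠ r) (h4 : q ≠ s) :
    ¬ ∃ w, w ∈ s(p, q) ∧ w ∈ s(r, s) := by
  rintro ⟨w, hw1, hw2⟩
  rw [Sym2.mem_iff] at hw1 hw2
  rcases hw1 with rfl | rfl <;> rcases hw2 with h | h
  · exact h1 h
  · exact h2 h
  · exact h3 h
  · exact h4 h

lemma aux_exists_fifth [Fintype V] (hn : 5 ≤ Fintype.card V) (a b c d : V) :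
    ∃ z : V, z ≠ a ∧ z ≠ b ∧ z ≠ c ∧ z ≠ d := by
  classical
  by_contra hc
  push_neg at hc
  have hsub : (Finset.univ : Finset V) ⊆ {a, b, c, d} := fun z _ => by
    by_cases h1 : z = a
    · simp [h1]
    · by_cases h2 : z = b
      · simp [h2]
      · by_cases h3 : z = c
        · simp [h3]
        · simp [hc z h1 h2 h3]
  have h4 : ({a, b, c, d} : Finset V).card ≤ 4 := by
    have i1 : ({a, b, c, d} : Finset V).card ≤ ({b, c, d} : Finset V).card + 1 :=
      Finset.card_insert_le _ _
    have i2 : ({b, c, d} : Finset V).card ≤ ({c, d} : Finset V).card + 1 :=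
      Finset.card_insert_le _ _
    have i3 : ({c, d} : Finset V).card ≤ ({d} : Finset V).card + 1 :=
      Finset.card_insert_le _ _
    have i4 : ({d} : Finset V).card = 1 := Finset.card_singleton d
    omega
  have h5 := (Finset.card_le_card hsub).trans h4
  simp only [Finset.card_univ] at h5
  omega

lemma aux_walk_closed' {S : Set V} (hcl : ∀ ⦃a b : V⦄, a ∈ S → G.Adj a b → b ∈ S) :
    ∀ {a b : V}, G.Walk a b → a ∈ S → b ∈ S := by
  intro a b p
  induction p with
  | nil => exact id
  | cons h _ ih => exact fun ha => ih (hcl ha h)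

lemma aux_exists_crossing' (hpre : G.Preconnected) {S : Set V} {v w : V}
    (hv : v ∈ S) (hw : w ∉ S) : ∃ a b, a ∈ S ∧ b ∉ S ∧ G.Adj a b := by
  by_contra hc
  obtain ⟨p⟩ := hpre v w
  exact hw (aux_walk_closed'
    (fun a b ha hab => by_contra fun hb => hc ⟨a, b, ha, hb, hab⟩) p hv)

lemma aux_star_odd [Fintype V] (hpre : G.Preconnected)
    (hn : 5 ≤ Fintype.card V) {e f g : G.edgeSet} (hef : e ≠ f) (heg : e ≠ g) (hfg : f ≠ g)
    {v : V} (hve : v ∈ (e : Sym2 V)) (hvf : v ∈ (f : Sym2 V)) (hvg : v ∈ (g : Sym2 V)) :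
    ∃ h : G.edgeSet, h ≠ e ∧ h ≠ f ∧ h ≠ g ∧
      (((∃ w, w ∈ (h : Sym2 V) ∧ w ∈ (e : Sym2 V)) ∧
        (∃ w, w ∈ (h : Sym2 V) ∧ w ∈ (f : Sym2 V)) ∧
        (∃ w, w ∈ (h : Sym2 V) ∧ w ∈ (g : Sym2 V))) ∨
       ((∃ w, w ∈ (h : Sym2 V) ∧ w ∈ (e : Sym2 V)) ∧
        ¬(∃ w, w ∈ (h : Sym2 V) ∧ w ∈ (f : Sym2 V)) ∧
        ¬(∃ w, w ∈ (h : Sym2 V) ∧ w ∈ (g : Sym2 V))) ∨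
       (¬(∃ w, w ∈ (h : Sym2 V) ∧ w ∈ (e : Sym2 V)) ∧
        (∃ w, w ∈ (h : Sym2 V) ∧ w ∈ (f : Sym2 V)) ∧
        ¬(∃ w, w ∈ (h : Sym2 V) ∧ w ∈ (g : Sym2 V))) ∨
       (¬(∃ w, w ∈ (h : Sym2 V) ∧ w ∈ (e : Sym2 V)) ∧
        ¬(∃ w, w ∈ (h : Sym2 V) ∧ w ∈ (f : Sym2 V)) ∧
        (∃ w, w ∈ (h : Sym2 V) ∧ w ∈ (g : Sym2 V)))) := by
  have hde : ¬ (e : Sym2 V).IsDiag := G.not_isDiag_of_mem_edgeSet e.2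
  have hdf : ¬ (f : Sym2 V).IsDiag := G.not_isDiag_of_mem_edgeSet f.2
  have hdg : ¬ (g : Sym2 V).IsDiag := G.not_isDiag_of_mem_edgeSet g.2
  set a := Sym2.Mem.other hve with hadef
  set b := Sym2.Mem.other hvf with hbdef
  set c := Sym2.Mem.other hvg with hcdef
  have hEa : s(v, a) = (e : Sym2 V) := Sym2.other_spec hve
  have hFb : s(v, b) = (f : Sym2 V) := Sym2.other_spec hvf
  have hGc : s(v, c) = (g : Sym2 V) := Sym2.other_spec hvg
  have hav : a ≠ v := Sym2.other_ne hde hve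
  have hbv : b ≠ v := Sym2.other_ne hdf hvf
  have hcv : c ≠ v := Sym2.other_ne hdg hvg
  have hab : a ≠ b := fun h => hef (Subtype.ext (hEa.symm.trans (h ▸ hFb)))
  have hac : a ≠ c := fun h => heg (Subtype.ext (hEa.symm.trans (h ▸ hGc)))
  have hbc : b ≠ c := fun h => hfg (Subtype.ext (hFb.symm.trans (h ▸ hGc)))
  obtain ⟨z, hz1, hz2, hz3, hz4⟩ := aux_exists_fifth hn v a b c
  have hzS : z ∉ ({v, a, b, c} : Set V) := by simp [hz1, hz2, hz3, hz4]
  obtain ⟨p, q, hp, hq, hpq⟩ := aux_exists_crossing' hpre (S := ({v, a, b, c} : Set V))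
    (Set.mem_insert v _) hzS
  simp only [Set.mem_insert_iff, Set.mem_singleton_iff, not_or] at hp hq
  obtain ⟨hqv, hqa, hqb, hqc⟩ := hq
  refine ⟨⟨s(p, q), hpq⟩, ?_, ?_, ?_, ?_⟩
  · intro hh
    have : q ∈ (e : Sym2 V) := by
      rw [← congrArg Subtype.val hh]
      exact Sym2.mem_mk_right p q
    rw [← hEa, Sym2.mem_iff] at this
    rcases this with h | h
    · exact hqv h
    · exact hqa h
  · intro hh
    have : q ∈ (f : Sym2 V) := by
      rw [← congrArg Subtype.val hh]
      exact Sym2.mem_mk_right p q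
    rw [← hFb, Sym2.mem_iff] at this
    rcases this with h | h
    · exact hqv h
    · exact hqb h
  · intro hh
    have : q ∈ (g : Sym2 V) := by
      rw [← congrArg Subtype.val hh]
      exact Sym2.mem_mk_right p q
    rw [← hGc, Sym2.mem_iff] at this
    rcases this with h | h
    · exact hqv h
    · exact hqc h
  · rcases hp with hp | hp | hp | hp
    · -- p = v : shares all three
      subst hp
      left
      exact ⟨⟨p, Sym2.mem_mk_left p q, hve⟩, ⟨p, Sym2.mem_mk_left p q, hvf⟩,
        ⟨p, Sym2.mem_mk_left p q, hvg⟩⟩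
    · subst hp
      -- p = a : shares only e
      right; left
      refine ⟨⟨a, Sym2.mem_mk_left a q, hEa ▸ Sym2.mem_mk_right v a⟩, ?_, ?_⟩
      · show ¬∃ w, w ∈ s(a, q) ∧ w ∈ (f : Sym2 V)
        rw [← hFb]
        exact aux_noshare hav hab hqv hqb
      · show ¬∃ w, w ∈ s(a, q) ∧ w ∈ (g : Sym2 V)
        rw [← hGc]
        exact aux_noshare hav hac hqv hqc
    · subst hp
      -- p = b : shares only f
      right; right; left
      refine ⟨?_, ⟨b, Sym2.mem_mk_left b q, hFb ▸ Sym2.mem_mk_right v b⟩, ?_⟩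
      · show ¬∃ w, w ∈ s(b, q) ∧ w ∈ (e : Sym2 V)
        rw [← hEa]
        exact aux_noshare hbv (fun h => hab h.symm) hqv hqa
      · show ¬∃ w, w ∈ s(b, q) ∧ w ∈ (g : Sym2 V)
        rw [← hGc]
        exact aux_noshare hbv hbc hqv hqc
    · subst hp
      -- p = c : shares only g
      right; right; right
      refine ⟨?_, ?_, ⟨c, Sym2.mem_mk_left c q, hGc ▸ Sym2.mem_mk_right v c⟩⟩
      · show ¬∃ w, w ∈ s(c, q) ∧ w ∈ (e : Sym2 V)
        rw [← hEa]
        exact aux_noshare hcv (fun h => hac h.symm) hqv hqa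
      · show ¬∃ w, w ∈ s(c, q) ∧ w ∈ (f : Sym2 V)
        rw [← hFb]
        exact aux_noshare hcv (fun h => hbc h.symm) hqv hqb
end Star

section StarMaps
variable {V : Type*} {G : SimpleGraph V}

lemma aux_share_transfer (φ : lineG G ≃g lineG G)
    {k l : G.edgeSet} (hkl : k ≠ l) :
    (∃ w, w ∈ (k : Sym2 V) ∧ w ∈ (l : Sym2 V)) ↔
    (∃ w, w ∈ ((φ k : G.edgeSet) : Sym2 V) ∧ w ∈ ((φ l : G.edgeSet) : Sym2 V)) := by
  constructor
  · intro hs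
    have h : (lineG G).Adj k l := ⟨hkl, hs⟩
    exact (φ.map_adj_iff.2 h).2
  · intro hs
    have hne : φ k ≠ φ l := fun h => hkl (φ.toEquiv.injective h)
    have h : (lineG G).Adj (φ k) (φ l) := ⟨hne, hs⟩
    exact (φ.map_adj_iff.1 h).2

lemma aux_star_maps [Fintype V] (hpre : G.Preconnected)
    (hn : 5 ≤ Fintype.card V) (φ : lineG G ≃g lineG G) {e f g : G.edgeSet}
    (hef : e ≠ f) (heg : e ≠ g) (hfg : f ≠ g) {v : V}
    (hve : v ∈ (e : Sym2 V)) (hvf : v ∈ (f : Sym2 V)) (hvg : v ∈ (g : Sym2 V)) :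
    ∃ x, x ∈ ((φ e : G.edgeSet) : Sym2 V) ∧ x ∈ ((φ f : G.edgeSet) : Sym2 V) ∧
      x ∈ ((φ g : G.edgeSet) : Sym2 V) := by
  have hef' : φ e ≠ φ f := fun h => hef (φ.toEquiv.injective h)
  have heg' : φ e ≠ φ g := fun h => heg (φ.toEquiv.injective h)
  have hfg' : φ f ≠ φ g := fun h => hfg (φ.toEquiv.injective h)
  obtain ⟨x, hxe, hxf⟩ := (aux_share_transfer φ hef).1 ⟨v, hve, hvf⟩
  obtain ⟨y, hye, hyg⟩ := (aux_share_transfer φ heg).1 ⟨v, hve, hvg⟩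
  obtain ⟨z, hzf, hzg⟩ := (aux_share_transfer φ hfg).1 ⟨v, hvf, hvg⟩
  rcases aux_starOrTriangle hef' heg' hfg' x hxe hxf y hye hyg z hzf hzg with
    h | ⟨a, b, c, hab, hbc, hac, hE, hF, hG⟩
  · exact h
  · exfalso
    obtain ⟨h, h1, h2, h3, hpat⟩ := aux_star_odd hpre hn hef heg hfg hve hvf hvg
    have h1' : φ h ≠ φ e := fun hh => h1 (φ.toEquiv.injective hh)
    have h2' : φ h ≠ φ f := fun hh => h2 (φ.toEquiv.injective hh)
    have h3' : φ h ≠ φ g := fun hh => h3 (φ.toEquiv.injective hh)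
    have te := aux_triangle_even hab hbc hac hE hF hG h1' h2' h3'
    have tf := aux_triangle_even hbc (fun hh => hac hh.symm) (fun hh => hab hh.symm)
      hF hG hE h2' h3' h1'
    have tg := aux_triangle_even (fun hh => hac hh.symm) hab (fun hh => hbc hh.symm)
      hG hE hF h3' h1' h2'
    rcases hpat with ⟨se, sf, sg⟩ | ⟨se, nf, ng⟩ | ⟨ne_, sf, ng⟩ | ⟨ne_, nf, sg⟩
    · exact te.1 ⟨(aux_share_transfer φ h1).1 se, (aux_share_transfer φ h2).1 sf,
        (aux_share_transfer φ h3).1 sg⟩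
    · rcases te.2 ((aux_share_transfer φ h1).1 se) with hs | hs
      · exact nf ((aux_share_transfer φ h2).2 hs)
      · exact ng ((aux_share_transfer φ h3).2 hs)
    · rcases tf.2 ((aux_share_transfer φ h2).1 sf) with hs | hs
      · exact ng ((aux_share_transfer φ h3).2 hs)
      · exact ne_ ((aux_share_transfer φ h1).2 hs)
    · rcases tg.2 ((aux_share_transfer φ h3).1 sg) with hs | hs
      · exact ne_ ((aux_share_transfer φ h1).2 hs)
      · exact nf ((aux_share_transfer φ h2).2 hs)
end StarMaps

section Whitney
variable {V : Type*} [Fintype V] {G : SimpleGraph V}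

lemma aux_whitney (hconn : G.Connected) (hn : 5 ≤ Fintype.card V) :
    Nonempty ((G ≃g G) ≃* (lineG G ≃g lineG G)) := by
  classical
  have hpre := hconn.preconnected
  have incident : ∀ v : V, ∃ e : G.edgeSet, v ∈ (e : Sym2 V) :=
    fun v => aux_exists_incident hpre (by omega) v
  have exists_comm : ∀ (φ : lineG G ≃g lineG G) (u : V), HasTwo G u →
      ∃ x, ∀ e : G.edgeSet, u ∈ (e : Sym2 V) → x ∈ ((φ e : G.edgeSet) : Sym2 V) := by
    intro φ u h2
    obtain ⟨e, f, hef, hue, huf⟩ := h2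
    obtain ⟨x, hxe, hxf⟩ := (aux_share_transfer φ hef).1 ⟨u, hue, huf⟩
    refine ⟨x, fun g hug => ?_⟩
    by_cases hge : g = e
    · rw [hge]; exact hxe
    by_cases hgf : g = f
    · rw [hgf]; exact hxf
    obtain ⟨y, hy1, hy2, hy3⟩ := aux_star_maps hpre hn φ hef (fun hh => hge hh.symm)
      (fun hh => hgf hh.symm) hue huf hug
    have hfef : ((φ e : G.edgeSet) : Sym2 V) ≠ ((φ f : G.edgeSet) : Sym2 V) :=
      fun hh => hef (φ.toEquiv.injective (Subtype.ext hh))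
    have hxy : x = y := aux_shared_unique hfef hxe hxf hy1 hy2
    rw [hxy]; exact hy3
  have comm_unique : ∀ (φ : lineG G ≃g lineG G) (u : V), HasTwo G u →
      ∀ x y, (∀ e : G.edgeSet, u ∈ (e : Sym2 V) → x ∈ ((φ e : G.edgeSet) : Sym2 V)) →
        (∀ e : G.edgeSet, u ∈ (e : Sym2 V) → y ∈ ((φ e : G.edgeSet) : Sym2 V)) → x = y := by
    intro φ u h2 x y hx hy
    obtain ⟨e, f, hef, hue, huf⟩ := h2
    have hfef : ((φ e : G.edgeSet) : Sym2 V) ≠ ((φ f : G.edgeSet) : Sym2 V) :=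
      fun hh => hef (φ.toEquiv.injective (Subtype.ext hh))
    exact aux_shared_unique hfef (hx e hue) (hx f huf) (hy e hue) (hy f huf)
  have exists_good : ∀ (φ : lineG G ≃g lineG G) (u : V),
      ∃ x, (∀ e : G.edgeSet, u ∈ (e : Sym2 V) → x ∈ ((φ e : G.edgeSet) : Sym2 V)) ∧
        (¬ HasTwo G u → ∀ (w : V) (e : G.edgeSet), u ∈ (e : Sym2 V) → w ∈ (e : Sym2 V) →
          w ≠ u → ∀ z, (∀ f : G.edgeSet, w ∈ (f : Sym2 V) → z ∈ ((φ f : G.edgeSet) : Sym2 V)) →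
            x ≠ z) := by
    intro φ u
    by_cases h2 : HasTwo G u
    · obtain ⟨x, hx⟩ := exists_comm φ u h2
      exact ⟨x, hx, fun hc => absurd h2 hc⟩
    · obtain ⟨e, he⟩ := incident u
      obtain ⟨w, hwe, hwu, hw2, huniq⟩ := aux_deg1 hpre (by omega) h2 he
      obtain ⟨z0, hz0⟩ := exists_comm φ w hw2
      have hz0e : z0 ∈ ((φ e : G.edgeSet) : Sym2 V) := hz0 e hwe
      have hnd : ¬ ((φ e : G.edgeSet) : Sym2 V).IsDiag :=
        G.not_isDiag_of_mem_edgeSet (φ e).2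
      refine ⟨Sym2.Mem.other hz0e, ?_, ?_⟩
      · intro f huf
        rw [huniq f huf]
        exact Sym2.other_mem hz0e
      · intro _ w' e' hue' hw'e' hw'u z hz
        have he'e : e' = e := huniq e' hue'
        subst he'e
        have hww' : w' = w := aux_mem_eq hue' hw'e' hwe hw'u hwu
        subst hww'
        have hzz : z = z0 := comm_unique φ w' hw2 z z0 hz hz0
        rw [hzz]
        exact Sym2.other_ne hnd hz0e
  let vm : (lineG G ≃g lineG G) → V → V := fun φ u => (exists_good φ u).choose
  have vmg := fun (φ : lineG G ≃g lineG G) (u : V) => (exists_good φ u).choose_spec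
  have main : ∀ (φ : lineG G ≃g lineG G) (e : G.edgeSet) (u v : V),
      (e : Sym2 V) = s(u, v) → ((φ e : G.edgeSet) : Sym2 V) = s(vm φ u, vm φ v) := by
    intro φ e u v he
    have hadj : G.Adj u v := G.mem_edgeSet.1 (he ▸ e.2)
    have huv : u ≠ v := hadj.ne
    have hue : u ∈ (e : Sym2 V) := by rw [he]; exact Sym2.mem_mk_left u v
    have hve : v ∈ (e : Sym2 V) := by rw [he]; exact Sym2.mem_mk_right u v
    have hu' : vm φ u ∈ ((φ e : G.edgeSet) : Sym2 V) := (vmg φ u).1 e hue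
    have hv' : vm φ v ∈ ((φ e : G.edgeSet) : Sym2 V) := (vmg φ v).1 e hve
    have hne : vm φ u ≠ vm φ v := by
      by_cases h2u : HasTwo G u
      · by_cases h2v : HasTwo G v
        · intro hxx
          obtain ⟨e1, e2, h12, hue1, hue2⟩ := h2u
          obtain ⟨f1, f2, g12, hvf1, hvf2⟩ := h2v
          have hfex : ∃ f : G.edgeSet, u ∈ (f : Sym2 V) ∧ f ≠ e := by
            by_cases h1e : e1 = e
            · exact ⟨e2, hue2, fun hh => h12 (h1e.trans hh.symm)⟩
            · exact ⟨e1, hue1, h1e⟩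
          have hgex : ∃ g : G.edgeSet, v ∈ (g : Sym2 V) ∧ g ≠ e := by
            by_cases h1e : f1 = e
            · exact ⟨f2, hvf2, fun hh => g12 (h1e.trans hh.symm)⟩
            · exact ⟨f1, hvf1, h1e⟩
          obtain ⟨f, huf, hfe⟩ := hfex
          obtain ⟨g, hvg, hge⟩ := hgex
          have hfg : f ≠ g := by
            intro hh
            subst hh
            exact hfe (aux_twoMem huv huf hvg he)
          have hxf : vm φ u ∈ ((φ f : G.edgeSet) : Sym2 V) := (vmg φ u).1 f huf
          have hxg : vm φ u ∈ ((φ g : G.edgeSet) : Sym2 V) := by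
            rw [hxx]; exact (vmg φ v).1 g hvg
          have hne1 : φ e ≠ φ f := fun hh => hfe ((φ.toEquiv.injective hh).symm)
          have hne2 : φ e ≠ φ g := fun hh => hge ((φ.toEquiv.injective hh).symm)
          have hne3 : φ f ≠ φ g := fun hh => hfg (φ.toEquiv.injective hh)
          obtain ⟨y, hy1, hy2, hy3⟩ := aux_star_maps hpre hn φ.symm hne1 hne2 hne3
            hu' hxf hxg
          rw [RelIso.symm_apply_apply] at hy1 hy2 hy3
          rw [he, Sym2.mem_iff] at hy1
          rcases hy1 with rfl | rfl
          · exact hge (aux_twoMem huv hy3 hvg he)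
          · exact hfe (aux_twoMem huv huf hy2 he)
        · intro hxx
          exact (vmg φ v).2 h2v u e hve hue huv (vm φ u) ((vmg φ u).1) hxx.symm
      · have h2v : HasTwo G v := by
          obtain ⟨w, hwe, hwu, hw2, _⟩ := aux_deg1 hpre (by omega) h2u hue
          have hvw : v = w := aux_mem_eq hue hve hwe huv.symm hwu
          rwa [hvw]
        exact (vmg φ u).2 h2u v e hue hve huv.symm (vm φ v) ((vmg φ v).1)
    exact (Sym2.mem_and_mem_iff hne).1 ⟨hu', hv'⟩
  have main' : ∀ (φ : lineG G ≃g lineG G) (e : G.edgeSet) (u v : V),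
      (e : Sym2 V) = s(u, v) → (e : Sym2 V) = s(vm φ.symm (vm φ u), vm φ.symm (vm φ v)) := by
    intro φ e u v he
    have h1 := main φ e u v he
    have h2 := main φ.symm (φ e) (vm φ u) (vm φ v) h1
    rwa [RelIso.symm_apply_apply] at h2
  have vmvm : ∀ (φ : lineG G ≃g lineG G) (u : V), vm φ.symm (vm φ u) = u := by
    have key : ∀ (φ : lineG G ≃g lineG G) (u : V), HasTwo G u →
        vm φ.symm (vm φ u) = u := by
      intro φ u h2
      obtain ⟨e, f, hef, hue, huf⟩ := h2
      have hEa : s(u, Sym2.Mem.other hue) = (e : Sym2 V) := Sym2.other_spec hue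
      have hFb : s(u, Sym2.Mem.other huf) = (f : Sym2 V) := Sym2.other_spec huf
      have h1 := main' φ e u (Sym2.Mem.other hue) hEa.symm
      have h2 := main' φ f u (Sym2.Mem.other huf) hFb.symm
      have m1 : vm φ.symm (vm φ u) ∈ (e : Sym2 V) := by
        rw [h1]; exact Sym2.mem_mk_left _ _
      have m2 : vm φ.symm (vm φ u) ∈ (f : Sym2 V) := by
        rw [h2]; exact Sym2.mem_mk_left _ _
      exact aux_shared_unique (fun hh => hef (Subtype.ext hh)) m1 m2 hue huf
    intro φ u
    by_cases h2 : HasTwo G u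
    · exact key φ u h2
    · obtain ⟨e, he⟩ := incident u
      obtain ⟨w, hwe, hwu, hw2, _⟩ := aux_deg1 hpre (by omega) h2 he
      have hE : (e : Sym2 V) = s(u, w) := (Sym2.mem_and_mem_iff hwu.symm).1 ⟨he, hwe⟩
      have h1 := main' φ e u w hE
      rw [key φ w hw2] at h1
      have h3 : s(u, w) = s(vm φ.symm (vm φ u), w) := hE.symm.trans h1
      rw [Sym2.eq_swap, show s(vm φ.symm (vm φ u), w) = s(w, vm φ.symm (vm φ u)) from
        Sym2.eq_swap] at h3
      exact (Sym2.congr_right.1 h3).symm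
  have vmadj : ∀ (φ : lineG G ≃g lineG G) (u v : V), G.Adj u v →
      G.Adj (vm φ u) (vm φ v) := by
    intro φ u v h
    have h1 := main φ ⟨s(u, v), h⟩ u v rfl
    have h2 := (φ ⟨s(u, v), h⟩ : G.edgeSet).2
    rw [h1] at h2
    exact G.mem_edgeSet.1 h2
  let Psi : (lineG G ≃g lineG G) → (G ≃g G) := fun φ =>
    { toEquiv := ⟨vm φ, vm φ.symm, vmvm φ, fun u => vmvm φ.symm u⟩
      map_rel_iff' := by
        intro u v
        show G.Adj (vm φ u) (vm φ v) ↔ G.Adj u v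
        constructor
        · intro h
          have h2 := vmadj φ.symm _ _ h
          rwa [vmvm, vmvm] at h2
        · exact vmadj φ u v }
  let Phi : (G ≃g G) → (lineG G ≃g lineG G) := fun σ =>
    { toEquiv := σ.mapEdgeSet
      map_rel_iff' := by
        intro e f
        show (lineG G).Adj (σ.mapEdgeSet e) (σ.mapEdgeSet f) ↔ (lineG G).Adj e f
        constructor
        · rintro ⟨hne, w, h1, h2⟩
          refine ⟨fun hh => hne (by rw [hh]), ?_⟩
          rw [aux_coe_mapEdgeSet, Sym2.mem_map] at h1 h2
          obtain ⟨a, ha, rfl⟩ := h1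
          obtain ⟨b, hb, hba⟩ := h2
          obtain rfl := σ.toEquiv.injective hba
          exact ⟨b, ha, hb⟩
        · rintro ⟨hne, w, h1, h2⟩
          exact ⟨fun hh => hne (σ.mapEdgeSet.injective hh), σ w,
            (aux_mem_mapEdgeSet σ w e).2 h1, (aux_mem_mapEdgeSet σ w f).2 h2⟩ }
  have commPhi : ∀ (σ : G ≃g G) (u : V) (e : G.edgeSet), u ∈ (e : Sym2 V) →
      σ u ∈ ((Phi σ e : G.edgeSet) : Sym2 V) := by
    intro σ u e hue
    exact (aux_mem_mapEdgeSet σ u e).2 hue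
  have goodPhi : ∀ (σ : G ≃g G) (u : V), vm (Phi σ) u = σ u := by
    intro σ u
    by_cases h2 : HasTwo G u
    · exact comm_unique (Phi σ) u h2 _ _ (vmg (Phi σ) u).1 (commPhi σ u)
    · obtain ⟨e, he⟩ := incident u
      obtain ⟨w, hwe, hwu, hw2, _⟩ := aux_deg1 hpre (by omega) h2 he
      have hE : (e : Sym2 V) = s(u, w) := (Sym2.mem_and_mem_iff hwu.symm).1 ⟨he, hwe⟩
      have h1 : vm (Phi σ) u ∈ ((Phi σ e : G.edgeSet) : Sym2 V) := (vmg _ u).1 e he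
      have hval : ((Phi σ e : G.edgeSet) : Sym2 V) = s(σ u, σ w) := by
        show (σ.mapEdgeSet e : Sym2 V) = _
        rw [aux_coe_mapEdgeSet, hE, Sym2.map_pair_eq]
      rw [hval, Sym2.mem_iff] at h1
      rcases h1 with h1 | h1
      · exact h1
      · exact absurd h1 ((vmg (Phi σ) u).2 h2 w e he hwe hwu (σ w) (commPhi σ w))
  refine ⟨MulEquiv.mk' ⟨Phi, Psi, ?_, ?_⟩ ?_⟩
  · intro σ
    apply RelIso.ext
    intro u
    exact goodPhi σ u
  · intro φ
    apply RelIso.ext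
    intro e
    apply Subtype.ext
    obtain ⟨u, v, huv⟩ := aux_rep ((e : G.edgeSet) : Sym2 V)
    show (((Psi φ).mapEdgeSet e : G.edgeSet) : Sym2 V) = ((φ e : G.edgeSet) : Sym2 V)
    rw [aux_coe_mapEdgeSet, huv, Sym2.map_pair_eq, main φ e u v huv]
    rfl
  · intro σ τ
    apply RelIso.ext
    intro e
    apply Subtype.ext
    show (((σ * τ).mapEdgeSet e : G.edgeSet) : Sym2 V) =
      ((σ.mapEdgeSet (τ.mapEdgeSet e) : G.edgeSet) : Sym2 V)
    obtain ⟨u, v, huv⟩ := aux_rep ((e : G.edgeSet) : Sym2 V)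
    rw [aux_coe_mapEdgeSet, aux_coe_mapEdgeSet, aux_coe_mapEdgeSet, huv,
      Sym2.map_pair_eq, Sym2.map_pair_eq, Sym2.map_pair_eq]
    rfl
end Whitney

section Parts
variable {V : Type*}

lemma aux_two_nbr_transfer {W : Type*} {H : SimpleGraph W} (φ : H ≃g H) (x : W)
    (h : ∃ p q, p ≠ q ∧ H.Adj (φ x) p ∧ H.Adj (φ x) q ∧
      ∀ r, H.Adj (φ x) r → r = p ∨ r = q) :
    ∃ p q, p ≠ q ∧ H.Adj x p ∧ H.Adj x q ∧ ∀ r, H.Adj x r → r = p ∨ r = q := by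
  obtain ⟨p, q, hpq, hp, hq, hcov⟩ := h
  refine ⟨φ.symm p, φ.symm q, fun hh => hpq ?_, ?_, ?_, ?_⟩
  · rw [← φ.apply_symm_apply p, hh, φ.apply_symm_apply]
  · apply φ.map_adj_iff.1
    rwa [RelIso.apply_symm_apply]
  · apply φ.map_adj_iff.1
    rwa [RelIso.apply_symm_apply]
  · intro r hr
    rcases hcov (φ r) (φ.map_adj_iff.2 hr) with h | h
    · left
      rw [← h, RelIso.symm_apply_apply]
    · right
      rw [← h, RelIso.symm_apply_apply]

lemma aux_parts_middle (G : SimpleGraph V)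
    (φ : middleGraph G ≃g middleGraph G) (u : V) :
    ∃ u', φ (Sum.inl u) = Sum.inl u' := by
  rcases hq : φ (Sum.inl u) with w | e
  · exact ⟨w, rfl⟩
  exfalso
  obtain ⟨a, b, hab⟩ := aux_rep ((e : G.edgeSet) : Sym2 V)
  have hadj : G.Adj a b := G.mem_edgeSet.1 (hab ▸ e.2)
  have h1 : (middleGraph G).Adj (Sum.inr e) (Sum.inl a) := by
    show a ∈ (e : Sym2 V)
    rw [hab]; exact Sym2.mem_mk_left a b
  have h2 : (middleGraph G).Adj (Sum.inr e) (Sum.inl b) := by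
    show b ∈ (e : Sym2 V)
    rw [hab]; exact Sym2.mem_mk_right a b
  have h3 : (Sum.inl a : V ⊕ G.edgeSet) ≠ Sum.inl b := fun h => hadj.ne (Sum.inl.inj h)
  have k1 : (middleGraph G).Adj (Sum.inl u) (φ.symm (Sum.inl a)) := by
    apply φ.map_adj_iff.1
    rw [RelIso.apply_symm_apply, hq]
    exact h1
  have k2 : (middleGraph G).Adj (Sum.inl u) (φ.symm (Sum.inl b)) := by
    apply φ.map_adj_iff.1
    rw [RelIso.apply_symm_apply, hq]
    exact h2
  rcases p1 : φ.symm (Sum.inl a) with w1 | f1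
  · rw [p1] at k1
    exact False.elim k1
  rcases p2 : φ.symm (Sum.inl b) with w2 | f2
  · rw [p2] at k2
    exact False.elim k2
  rw [p1] at k1
  rw [p2] at k2
  have hf12 : f1 ≠ f2 := by
    intro h
    apply h3
    rw [← RelIso.apply_symm_apply φ (Sum.inl a), ← RelIso.apply_symm_apply φ (Sum.inl b),
      p1, p2, h]
  have hcl : (middleGraph G).Adj (Sum.inr f1) (Sum.inr f2) := ⟨hf12, u, k1, k2⟩
  rw [← p1, ← p2] at hcl
  exact False.elim (φ.symm.map_adj_iff.1 hcl)

lemma aux_three_ne [Fintype V] (hn : 4 ≤ Fintype.card V) (u : V) :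
    ∃ w1 w2 w3 : V, w1 ≠ u ∧ w2 ≠ u ∧ w3 ≠ u ∧ w1 ≠ w2 ∧ w1 ≠ w3 ∧ w2 ≠ w3 := by
  classical
  have hc1 : 3 ≤ (Finset.univ.erase u).card := by
    rw [Finset.card_erase_of_mem (Finset.mem_univ u), Finset.card_univ]
    omega
  obtain ⟨w1, hw1⟩ := Finset.card_pos.1 (show 0 < (Finset.univ.erase u).card by omega)
  have hc2 : 2 ≤ ((Finset.univ.erase u).erase w1).card := by
    rw [Finset.card_erase_of_mem hw1]
    omega
  obtain ⟨w2, hw2⟩ := Finset.card_pos.1 (show 0 < ((Finset.univ.erase u).erase w1).card by omega)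
  have hc3 : 1 ≤ (((Finset.univ.erase u).erase w1).erase w2).card := by
    rw [Finset.card_erase_of_mem hw2]
    omega
  obtain ⟨w3, hw3⟩ :=
    Finset.card_pos.1 (show 0 < (((Finset.univ.erase u).erase w1).erase w2).card by omega)
  rw [Finset.mem_erase] at hw3
  obtain ⟨h32, hw3'⟩ := hw3
  rw [Finset.mem_erase] at hw3' hw2
  obtain ⟨h31, hw3''⟩ := hw3'
  obtain ⟨h21, hw2'⟩ := hw2
  rw [Finset.mem_erase] at hw3'' hw2' hw1
  exact ⟨w1, w2, w3, hw1.1, hw2'.1, hw3''.1, fun h => h21 h.symm, fun h => h31 h.symm,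
    fun h => h32 h.symm⟩

lemma aux_parts_central [Fintype V] (G : SimpleGraph V) (hn : 4 ≤ Fintype.card V)
    (φ : centralGraph G ≃g centralGraph G) (u : V) :
    ∃ u', φ (Sum.inl u) = Sum.inl u' := by
  classical
  rcases hq : φ (Sum.inl u) with w | e
  · exact ⟨w, rfl⟩
  exfalso
  obtain ⟨w1, w2, w3, h1u, h2u, h3u, h12, h13, h23⟩ := aux_three_ne hn u
  set nb : V → V ⊕ G.edgeSet := fun w =>
    if h : G.Adj u w then Sum.inr ⟨s(u, w), h⟩ else Sum.inl w with hnb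
  have hnb_adj : ∀ w, w ≠ u → (centralGraph G).Adj (Sum.inl u) (nb w) := by
    intro w hw
    by_cases h : G.Adj u w
    · simp only [hnb, dif_pos h]
      show u ∈ s(u, w)
      exact Sym2.mem_mk_left u w
    · simp only [hnb, dif_neg h]
      show u ≠ w ∧ ¬ G.Adj u w
      exact ⟨fun hh => hw hh.symm, h⟩
  have hnb_inj : ∀ w w', nb w = nb w' → w = w' := by
    intro w w' hww
    by_cases h : G.Adj u w <;> by_cases h' : G.Adj u w' <;>
      simp only [hnb, dif_pos, dif_neg, h, h'] at hww
    · have := congrArg Subtype.val (Sum.inr.inj hww)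
      exact Sym2.congr_right.1 this
    · exact absurd hww (by simp)
    · exact absurd hww (by simp)
    · exact Sum.inl.inj hww
  have himg : ∀ w, w ≠ u → ∃ c, c ∈ ((e : G.edgeSet) : Sym2 V) ∧ φ (nb w) = Sum.inl c := by
    intro w hw
    have hadj : (centralGraph G).Adj (Sum.inr e) (φ (nb w)) := by
      rw [← hq]
      exact φ.map_adj_iff.2 (hnb_adj w hw)
    rcases hx : φ (nb w) with c | f
    · rw [hx] at hadj
      exact ⟨c, hadj, rfl⟩
    · rw [hx] at hadj
      exact False.elim hadj
  obtain ⟨c1, hc1, hg1⟩ := himg w1 h1u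
  obtain ⟨c2, hc2, hg2⟩ := himg w2 h2u
  obtain ⟨c3, hc3, hg3⟩ := himg w3 h3u
  have hcne : ∀ {wa wb : V} {ca cb : V}, wa ≠ wb → φ (nb wa) = Sum.inl ca →
      φ (nb wb) = Sum.inl cb → ca ≠ cb := by
    intro wa wb ca cb hab ha hb hcc
    apply hab
    apply hnb_inj
    apply φ.toEquiv.injective
    show φ (nb wa) = φ (nb wb)
    rw [ha, hb, hcc]
  have hc12 := hcne h12 hg1 hg2
  have hc13 := hcne h13 hg1 hg3
  have hc23 := hcne h23 hg2 hg3
  obtain ⟨a, b, hab⟩ := aux_rep ((e : G.edgeSet) : Sym2 V)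
  rw [hab, Sym2.mem_iff] at hc1 hc2 hc3
  rcases hc1 with rfl | rfl <;> rcases hc2 with h2' | h2' <;> rcases hc3 with h3' | h3'
  · exact hc12 h2'.symm
  · exact hc12 h2'.symm
  · exact hc13 h3'.symm
  · exact hc23 (h2'.trans h3'.symm)
  · exact hc23 (h2'.trans h3'.symm)
  · exact hc13 h3'.symm
  · exact hc12 h2'.symm
  · exact hc12 h2'.symm

lemma aux_parts_subdivision [Fintype V] (G : SimpleGraph V) (hconn : G.Connected)
    (hn : 5 ≤ Fintype.card V) (hcyc : IsEmpty (G ≃g cycleGraph (Fintype.card V)))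
    (φ : subdivisionGraph G ≃g subdivisionGraph G) (u : V) :
    ∃ u', φ (Sum.inl u) = Sum.inl u' := by
  classical
  by_contra hc
  push_neg at hc
  have hu : u ∈ {w : V | ∃ e, φ (Sum.inl w) = Sum.inr e} := by
    rcases hq : φ (Sum.inl u) with w | e
    · exact absurd hq (hc w)
    · exact ⟨e, hq⟩
  have hcl : ∀ ⦃a b : V⦄, a ∈ {w : V | ∃ e, φ (Sum.inl w) = Sum.inr e} → G.Adj a b →
      b ∈ {w : V | ∃ e, φ (Sum.inl w) = Sum.inr e} := by
    rintro a b ⟨ea, hea⟩ hab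
    have hadj_af : (subdivisionGraph G).Adj (Sum.inl a) (Sum.inr ⟨s(a, b), hab⟩) :=
      Sym2.mem_mk_left a b
    have h1 : (subdivisionGraph G).Adj (Sum.inr ea) (φ (Sum.inr ⟨s(a, b), hab⟩)) := by
      rw [← hea]
      exact φ.map_adj_iff.2 hadj_af
    rcases hz : φ (Sum.inr ⟨s(a, b), hab⟩) with z | g
    swap
    · rw [hz] at h1
      exact False.elim h1
    have hadj_bf : (subdivisionGraph G).Adj (Sum.inl b) (Sum.inr ⟨s(a, b), hab⟩) :=
      Sym2.mem_mk_right a b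
    have h2 : (subdivisionGraph G).Adj (φ (Sum.inl b)) (Sum.inl z) := by
      rw [← hz]
      exact φ.map_adj_iff.2 hadj_bf
    rcases hw : φ (Sum.inl b) with y | g
    · rw [hw] at h2
      exact False.elim h2
    · exact ⟨g, hw⟩
  have hall : ∀ w : V, ∃ e, φ (Sum.inl w) = Sum.inr e := by
    intro w
    obtain ⟨p⟩ := hconn.preconnected u w
    exact aux_walk_closed hcl p hu
  have hQe : ∀ e : G.edgeSet, ∃ p q, p ≠ q ∧ (subdivisionGraph G).Adj (Sum.inr e) p ∧
      (subdivisionGraph G).Adj (Sum.inr e) q ∧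
      ∀ r, (subdivisionGraph G).Adj (Sum.inr e) r → r = p ∨ r = q := by
    intro e
    obtain ⟨a, b, hab⟩ := aux_rep ((e : G.edgeSet) : Sym2 V)
    have hadj : G.Adj a b := G.mem_edgeSet.1 (hab ▸ e.2)
    refine ⟨Sum.inl a, Sum.inl b, fun h => hadj.ne (Sum.inl.inj h), ?_, ?_, ?_⟩
    · show a ∈ (e : Sym2 V)
      rw [hab]; exact Sym2.mem_mk_left a b
    · show b ∈ (e : Sym2 V)
      rw [hab]; exact Sym2.mem_mk_right a b
    · intro r hr
      rcases r with c | f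
      · have hce : c ∈ (e : Sym2 V) := hr
        rw [hab, Sym2.mem_iff] at hce
        rcases hce with rfl | rfl
        · exact Or.inl rfl
        · exact Or.inr rfl
      · exact False.elim hr
  have h2nb : ∀ w : V, ∃ a b, a ≠ b ∧ G.Adj w a ∧ G.Adj w b ∧
      ∀ c, G.Adj w c → c = a ∨ c = b := by
    intro w
    obtain ⟨e, he⟩ := hall w
    have hQw := aux_two_nbr_transfer φ (Sum.inl w) (by rw [he]; exact hQe e)
    obtain ⟨p, q, hpq, hp, hq, hcov⟩ := hQw
    rcases p with a | f
    · exact False.elim hp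
    rcases q with a | g
    · exact False.elim hq
    have hwf : w ∈ ((f : G.edgeSet) : Sym2 V) := hp
    have hwg : w ∈ ((g : G.edgeSet) : Sym2 V) := hq
    have hfg : f ≠ g := fun h => hpq (by rw [h])
    refine ⟨Sym2.Mem.other hwf, Sym2.Mem.other hwg, ?_, ?_, ?_, ?_⟩
    · intro h
      apply hfg
      apply Subtype.ext
      rw [← Sym2.other_spec hwf, ← Sym2.other_spec hwg, h]
    · have h5 := f.2
      rw [← Sym2.other_spec hwf] at h5
      exact G.mem_edgeSet.1 h5
    · have h5 := g.2
      rw [← Sym2.other_spec hwg] at h5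
      exact G.mem_edgeSet.1 h5
    · intro c hc
      have hcedge : (subdivisionGraph G).Adj (Sum.inl w) (Sum.inr ⟨s(w, c), hc⟩) :=
        Sym2.mem_mk_left w c
      rcases hcov _ hcedge with h | h
      · left
        have h' : (⟨s(w, c), hc⟩ : G.edgeSet) = f := Sum.inr.inj h
        have h6 : s(w, c) = s(w, Sym2.Mem.other hwf) :=
          (congrArg Subtype.val h').trans (Sym2.other_spec hwf).symm
        exact Sym2.congr_right.1 h6
      · right
        have h' : (⟨s(w, c), hc⟩ : G.edgeSet) = g := Sum.inr.inj h
        have h6 : s(w, c) = s(w, Sym2.Mem.other hwg) :=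
          (congrArg Subtype.val h').trans (Sym2.other_spec hwg).symm
        exact Sym2.congr_right.1 h6
  obtain ⟨iso⟩ := aux_cycle hconn (by omega) h2nb
  exact hcyc.false iso
end Parts

/-- For a connected graph `G` of order `n ≥ 5` that is not a cycle,
`Aut(G) ≅ Aut(L(G)) ≅ Aut(S(G)) ≅ Aut(C(G)) ≅ Aut(M(G))` as abstract groups. -/
theorem stmt_5 {V : Type*} [Fintype V] (G : SimpleGraph V)
    (hconn : G.Connected) (hn : 5 ≤ Fintype.card V)
    (hcyc : IsEmpty (G ≃g cycleGraph (Fintype.card V))) :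
    Nonempty ((G ≃g G) ≃* (lineG G ≃g lineG G)) ∧
    Nonempty ((G ≃g G) ≃* (subdivisionGraph G ≃g subdivisionGraph G)) ∧
    Nonempty ((G ≃g G) ≃* (centralGraph G ≃g centralGraph G)) ∧
    Nonempty ((G ≃g G) ≃* (middleGraph G ≃g middleGraph G)) := by
  refine ⟨aux_whitney hconn hn, ?_, ?_, ?_⟩
  · exact aux_transfer G (subdivisionGraph G)
      (fun u e => Iff.rfl)
      (fun σ u v => Iff.rfl)
      (fun σ e f => Iff.rfl)
      (fun φ u => aux_parts_subdivision G hconn hn hcyc φ u)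
  · exact aux_transfer G (centralGraph G)
      (fun u e => Iff.rfl)
      (fun σ u v => by
        show (σ u ≠ σ v ∧ ¬ G.Adj (σ u) (σ v)) ↔ (u ≠ v ∧ ¬ G.Adj u v)
        exact and_congr (not_congr σ.toEquiv.apply_eq_iff_eq) (not_congr σ.map_adj_iff))
      (fun σ e f => Iff.rfl)
      (fun φ u => aux_parts_central G (by omega) φ u)
  · exact aux_transfer G (middleGraph G)
      (fun u e => Iff.rfl)
      (fun σ u v => Iff.rfl)
      (fun σ e f => by
        show (σ.mapEdgeSet e ≠ σ.mapEdgeSet f ∧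
            ∃ w, w ∈ ((σ.mapEdgeSet e : G.edgeSet) : Sym2 V) ∧
              w ∈ ((σ.mapEdgeSet f : G.edgeSet) : Sym2 V)) ↔
          (e ≠ f ∧ ∃ w, w ∈ ((e : G.edgeSet) : Sym2 V) ∧ w ∈ ((f : G.edgeSet) : Sym2 V))
        apply and_congr (not_congr σ.mapEdgeSet.apply_eq_iff_eq)
        constructor
        · rintro ⟨w, h1, h2⟩
          rw [aux_coe_mapEdgeSet, Sym2.mem_map] at h1 h2
          obtain ⟨a, ha, rfl⟩ := h1
          obtain ⟨b, hb, hba⟩ := h2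
          obtain rfl := σ.toEquiv.injective hba
          exact ⟨b, ha, hb⟩
        · rintro ⟨w, h1, h2⟩
          exact ⟨σ w, (aux_mem_mapEdgeSet σ w e).2 h1, (aux_mem_mapEdgeSet σ w f).2 h2⟩)
      (fun φ u => aux_parts_middle G φ u)
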